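/- Let X̃₁ and X̃₂ be strong fuzzy incidence graphs without isolated vertices, and let D₁ and D₂ be strong incidence dominating sets of X̃₁ and X̃₂ respectively. Then D₁ × V₂ and V₁ × D₂ are strong incidence dominating sets of the tensor product X̃ = X̃₁ ⋄ X̃₂, and γ_IS(X̃) ≤ min{W(D₁ × V₂), W(V₁ × D₂)}. -/

import Mathlib

open scoped BigOperators

/-- A fuzzy incidence graph on a finite vertex type `V`.  An (undirected, loopless) edge `xy`
is encoded by the symmetric membership function `rho`, and the incidence pair `(x, xy)`
is encoded by `eta x y` (so `eta x y` is the membership value of the pair consisting of the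
vertex `x` and the edge joining `x` and `y`). All membership values lie in `[0,1]`,
`rho xy ≤ min (eps x) (eps y)` and `eta (x, xy) ≤ min (eps x) (rho xy)`. -/
structure FIG (V : Type) [Fintype V] [DecidableEq V] where
  eps : V → ℝ
  rho : V → V → ℝ
  eta : V → V → ℝ
  eps_nonneg : ∀ x, 0 ≤ eps x
  eps_le_one : ∀ x, eps x ≤ 1
  rho_nonneg : ∀ x y, 0 ≤ rho x y
  rho_symm : ∀ x y, rho x y = rho y x
  rho_le : ∀ x y, rho x y ≤ min (eps x) (eps y)
  rho_irrefl : ∀ x, rho x x = 0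
  eta_nonneg : ∀ x y, 0 ≤ eta x y
  eta_le : ∀ x y, eta x y ≤ min (eps x) (rho x y)

namespace FIG

variable {V V₁ V₂ : Type} [Fintype V] [DecidableEq V]
  [Fintype V₁] [DecidableEq V₁] [Fintype V₂] [DecidableEq V₂]

/-- `(x, xy)` is a pair of the fuzzy incidence graph (i.e. belongs to the support `η*`). -/
def IsPair (G : FIG V) (x y : V) : Prop := 0 < G.eta x y

/-- the minimum of the two pair weights along one edge step of an incidence path -/
def pairMin (G : FIG V) (a b : V) : ℝ := min (G.eta a b) (G.eta b a)

/-- the minimum of the pair weights along the internal steps of a vertex list -/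
def chainStrength (G : FIG V) : List V → ℝ
  | [] => 1
  | [_] => 1
  | a :: b :: l => min (G.pairMin a b) (G.chainStrength (b :: l))

/-- The set of incidence strengths of incidence paths from the vertex `x` to the edge `yz`:
a path is recorded by its (pairwise distinct) sequence of vertices, starting at `x` and ending
at an endpoint of the edge `yz`; its strength is the minimum of the weights of its pairs
(pairs of weight `0` are not genuine pairs, but a list using them has strength `0`, so
including such lists does not alter the supremum below). -/
def pathStrengths (G : FIG V) (x y z : V) : Set ℝ :=
  {s | ∃ l : List V, l.Nodup ∧ l.head? = some x ∧
      ((l.getLast? = some y ∧ s = min (G.chainStrength l) (G.eta y z)) ∨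
       (l.getLast? = some z ∧ s = min (G.chainStrength l) (G.eta z y)))}

/-- `ICONN G x y z` is the greatest incidence strength of an incidence path from the
vertex `x` to the edge `yz` (the incidence connectivity `ICONN_G (x, yz)`). -/
noncomputable def ICONN (G : FIG V) (x y z : V) : ℝ := sSup (G.pathStrengths x y z)

/-- the fuzzy incidence graph obtained by deleting the pair `(a, ab)` -/
def deletePair (G : FIG V) (a b : V) : FIG V where
  eps := G.eps
  rho := G.rho
  eta := fun u v => if u = a ∧ v = b then 0 else G.eta u v
  eps_nonneg := G.eps_nonneg
  eps_le_one := G.eps_le_one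
  rho_nonneg := G.rho_nonneg
  rho_symm := G.rho_symm
  rho_le := G.rho_le
  rho_irrefl := G.rho_irrefl
  eta_nonneg := by
    intro u v; (try dsimp only); split
    · exact le_refl 0
    · exact G.eta_nonneg u v
  eta_le := by
    intro u v; (try dsimp only); split
    · exact le_min (G.eps_nonneg u) (G.rho_nonneg u v)
    · exact G.eta_le u v

/-- The pair `(x, xy)` is strong: its weight is at least the incidence connectivity
between `x` and the edge `xy` in the graph obtained by deleting the pair `(x, xy)`. -/
def IsStrongPair (G : FIG V) (x y : V) : Prop :=
  (G.deletePair x y).ICONN x x y ≤ G.eta x y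

/-- a strong fuzzy incidence graph: every pair is strong -/
def Strong (G : FIG V) : Prop := ∀ x y, G.IsPair x y → G.IsStrongPair x y

/-- The pair `(x, xy)` is effective: `η(x, xy) = min (ε x) (ρ xy)`. -/
def EffectivePair (G : FIG V) (x y : V) : Prop :=
  G.eta x y = min (G.eps x) (G.rho x y)

/-- a fuzzy incidence graph in which every pair is effective -/
def EffectivePairs (G : FIG V) : Prop := ∀ x y, G.IsPair x y → G.EffectivePair x y

/-- `x` is a strong incidence neighbour of `y`: both `(x, xy)` and `(y, xy)` are
(genuine) strong pairs. -/
def SIN (G : FIG V) (x y : V) : Prop :=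
  G.IsPair x y ∧ G.IsPair y x ∧ G.IsStrongPair x y ∧ G.IsStrongPair y x

/-- a strong incidence dominating set (SIDS) -/
def SIDS (G : FIG V) (D : Finset V) : Prop :=
  ∀ x, x ∉ D → ∃ y ∈ D, G.SIN x y

/-- the contribution of a vertex `x` to the weight of a dominating set: the minimum
weight of a strong pair `(x, xy)` with `y` a strong incidence neighbour of `x` -/
noncomputable def vertexWeight (G : FIG V) (x : V) : ℝ :=
  sInf {w | ∃ y, G.SIN x y ∧ w = G.eta x y}

/-- the weight `W(D)` of a strong incidence dominating set -/
noncomputable def weight (G : FIG V) (D : Finset V) : ℝ :=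
  ∑ x ∈ D, G.vertexWeight x

/-- the strong incidence domination number `γ_IS`: the least weight of a SIDS -/
noncomputable def gammaIS (G : FIG V) : ℝ :=
  sInf {w | ∃ D : Finset V, G.SIDS D ∧ w = G.weight D}

/-- a minimum strong incidence dominating set -/
def MinSIDS (G : FIG V) (D : Finset V) : Prop :=
  G.SIDS D ∧ G.weight D = G.gammaIS

/-- a complete fuzzy incidence graph: every two distinct vertices are joined by an edge,
every edge has weight `min (eps x) (eps y)`, and every pair on an edge is effective -/
def Complete (G : FIG V) : Prop :=
  (∀ x, 0 < G.eps x) ∧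
  (∀ x y, x ≠ y → 0 < G.rho x y) ∧
  (∀ x y, x ≠ y → G.rho x y = min (G.eps x) (G.eps y)) ∧
  (∀ x y, 0 < G.rho x y → G.eta x y = min (G.eps x) (G.rho x y))

/-- The tensor product of two fuzzy incidence graphs: `(a₁,b₁)(a₂,b₂)` is an edge when
`a₁a₂ ∈ E₁` and `b₁b₂ ∈ E₂`; a pair of the product exists when all four corresponding
pairs of the factors exist, with weight `min (η₁ (a₁,a₁a₂)) (η₂ (b₁,b₁b₂))`. -/
noncomputable def tensor (G₁ : FIG V₁) (G₂ : FIG V₂) : FIG (V₁ × V₂) where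
  eps := fun p => min (G₁.eps p.1) (G₂.eps p.2)
  rho := fun p q => min (G₁.rho p.1 q.1) (G₂.rho p.2 q.2)
  eta := fun p q =>
    if 0 < G₁.eta p.1 q.1 ∧ 0 < G₁.eta q.1 p.1 ∧ 0 < G₂.eta p.2 q.2 ∧ 0 < G₂.eta q.2 p.2
    then min (G₁.eta p.1 q.1) (G₂.eta p.2 q.2) else 0
  eps_nonneg := fun p => le_min (G₁.eps_nonneg p.1) (G₂.eps_nonneg p.2)
  eps_le_one := fun p => min_le_of_left_le (G₁.eps_le_one p.1)
  rho_nonneg := fun p q => le_min (G₁.rho_nonneg _ _) (G₂.rho_nonneg _ _)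
  rho_symm := fun p q => by
    (try dsimp only); rw [G₁.rho_symm p.1 q.1, G₂.rho_symm p.2 q.2]
  rho_le := by
    intro p q; (try dsimp only)
    refine le_min (le_min (min_le_of_left_le ?_) (min_le_of_right_le ?_))
      (le_min (min_le_of_left_le ?_) (min_le_of_right_le ?_))
    · exact le_trans (G₁.rho_le p.1 q.1) (min_le_left _ _)
    · exact le_trans (G₂.rho_le p.2 q.2) (min_le_left _ _)
    · exact le_trans (G₁.rho_le p.1 q.1) (min_le_right _ _)
    · exact le_trans (G₂.rho_le p.2 q.2) (min_le_right _ _)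
  rho_irrefl := by
    intro p; (try dsimp only)
    rw [G₁.rho_irrefl, G₂.rho_irrefl]
    exact min_self 0
  eta_nonneg := by
    intro p q; (try dsimp only); split
    · exact le_min (G₁.eta_nonneg _ _) (G₂.eta_nonneg _ _)
    · exact le_refl 0
  eta_le := by
    intro p q; (try dsimp only); split
    · refine le_min (le_min (min_le_of_left_le ?_) (min_le_of_right_le ?_))
        (le_min (min_le_of_left_le ?_) (min_le_of_right_le ?_))
      · exact le_trans (G₁.eta_le p.1 q.1) (min_le_left _ _)
      · exact le_trans (G₂.eta_le p.2 q.2) (min_le_left _ _)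
      · exact le_trans (G₁.eta_le p.1 q.1) (min_le_right _ _)
      · exact le_trans (G₂.eta_le p.2 q.2) (min_le_right _ _)
    · exact le_min (le_min (G₁.eps_nonneg _) (G₂.eps_nonneg _))
        (le_min (G₁.rho_nonneg _ _) (G₂.rho_nonneg _ _))


/-! ### Auxiliary lemmas -/

lemma aux_chainStrength_le_one (G : FIG V) : ∀ l : List V, G.chainStrength l ≤ 1
  | [] => le_refl 1
  | [_] => le_refl 1
  | _ :: b :: l => min_le_of_right_le (aux_chainStrength_le_one G (b :: l))

lemma aux_chainStrength_le_pairMin (G : FIG V) :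
    ∀ l : List V, ∀ p ∈ l.zip l.tail, G.chainStrength l ≤ G.pairMin p.1 p.2
  | [] => by simp
  | [_] => by simp
  | a :: b :: l => by
    intro p hp
    have hz : (a :: b :: l).zip (a :: b :: l).tail
        = (a, b) :: ((b :: l).zip (b :: l).tail) := rfl
    rw [hz] at hp
    rcases List.mem_cons.1 hp with h | h
    · subst h; exact min_le_left _ _
    · exact le_trans (min_le_right _ _) (aux_chainStrength_le_pairMin G (b :: l) p h)

lemma aux_le_chainStrength (G : FIG V) (c : ℝ) (hc : c ≤ 1) :
    ∀ l : List V, (∀ p ∈ l.zip l.tail, c ≤ G.pairMin p.1 p.2) → c ≤ G.chainStrength l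
  | [] => fun _ => hc
  | [_] => fun _ => hc
  | a :: b :: l => fun h => by
    have hz : (a :: b :: l).zip (a :: b :: l).tail
        = (a, b) :: ((b :: l).zip (b :: l).tail) := rfl
    rw [hz] at h
    exact le_min (h (a, b) (List.mem_cons_self))
      (aux_le_chainStrength G c hc (b :: l) fun p hp => h p (List.mem_cons_of_mem _ hp))

lemma aux_mem_zip_tail_cons {V : Type} (x : V) :
    ∀ (m : List V) (p : V × V), p ∈ m.zip m.tail → p ∈ (x :: m).zip m
  | [], p, hp => by simp at hp
  | _ :: _, _, hp => List.mem_cons_of_mem _ hp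

lemma aux_mem_zip_tail_append {V : Type} :
    ∀ (pre l : List V) (p : V × V), p ∈ l.zip l.tail → p ∈ (pre ++ l).zip (pre ++ l).tail
  | [], _, _, hp => hp
  | x :: pre, l, p, hp => aux_mem_zip_tail_cons x (pre ++ l) p (aux_mem_zip_tail_append pre l p hp)

/-- Extracting a path (nodup list) from a walk, with the same endpoints, whose
steps are among the steps of the walk. -/
lemma aux_exists_nodup_walk {V : Type} [DecidableEq V] :
    ∀ (n : ℕ) (l : List V), l.length ≤ n →
      ∃ l' : List V, l'.Nodup ∧ l'.head? = l.head? ∧ l'.getLast? = l.getLast? ∧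
        (∀ x ∈ l', x ∈ l) ∧ ∀ p ∈ l'.zip l'.tail, p ∈ l.zip l.tail := by
  intro n
  induction n with
  | zero =>
    intro l hl
    have : l = [] := List.length_eq_zero_iff.1 (Nat.le_zero.1 hl)
    subst this
    exact ⟨[], by simp, rfl, rfl, by simp, by simp⟩
  | succ n ih =>
    intro l hl
    rcases l with _ | ⟨a, t⟩
    · exact ⟨[], by simp, rfl, rfl, by simp, by simp⟩
    · by_cases hat : a ∈ t
      · obtain ⟨s, t₂, rfl⟩ := List.append_of_mem hat
        have hlen : (a :: t₂).length ≤ n := by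
          simp only [List.length_cons, List.length_append] at hl ⊢
          omega
        obtain ⟨l', h1, h2, h3, h5, h4⟩ := ih (a :: t₂) hlen
        have hfact : a :: (s ++ a :: t₂) = (a :: s) ++ (a :: t₂) := by simp
        refine ⟨l', h1, by rw [h2]; rfl, ?_, ?_, ?_⟩
        · rw [h3, hfact, List.getLast?_append_of_ne_nil _ (by simp)]
        · intro x hx
          have := h5 x hx
          rw [hfact]
          exact List.mem_append_right _ this
        · intro p hp
          rw [hfact]
          exact aux_mem_zip_tail_append (a :: s) (a :: t₂) p (h4 p hp)
      · rcases t with _ | ⟨b, t'⟩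
        · exact ⟨[a], by simp, rfl, rfl, by simp, by simp⟩
        · have hlen : (b :: t').length ≤ n := by
            simp only [List.length_cons] at hl ⊢; omega
          obtain ⟨l', h1, h2, h3, h5, h4⟩ := ih (b :: t') hlen
          rcases l' with _ | ⟨c, r⟩
          · simp at h2
          · have hcb : b = c := by symm; simpa using h2
            subst hcb
            refine ⟨a :: b :: r, ?_, rfl, ?_, ?_, ?_⟩
            · refine List.nodup_cons.2 ⟨fun hmem => hat (h5 a hmem), h1⟩
            · have e1 : (a :: b :: r).getLast? = (b :: r).getLast? := by
                rw [show a :: b :: r = [a] ++ (b :: r) from rfl,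
                  List.getLast?_append_of_ne_nil _ (by simp)]
              have e2 : (a :: b :: t').getLast? = (b :: t').getLast? := by
                rw [show a :: b :: t' = [a] ++ (b :: t') from rfl,
                  List.getLast?_append_of_ne_nil _ (by simp)]
              rw [e1, e2, h3]
            · intro x hx
              rcases List.mem_cons.1 hx with h | h
              · subst h; exact List.mem_cons_self
              · exact List.mem_cons_of_mem _ (h5 x h)
            · intro p hp
              have hz : (a :: b :: r).zip (a :: b :: r).tail
                  = (a, b) :: ((b :: r).zip (b :: r).tail) := rfl
              rw [hz] at hp
              rcases List.mem_cons.1 hp with h | h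
              · subst h; exact List.mem_cons_self
              · exact aux_mem_zip_tail_cons a (b :: t') p (h4 p h)

lemma aux_bddAbove_pathStrengths (G : FIG V) (x y z : V) :
    BddAbove (G.pathStrengths x y z) := by
  refine ⟨1, ?_⟩
  rintro s ⟨l, -, -, (⟨-, rfl⟩ | ⟨-, rfl⟩)⟩ <;>
    exact min_le_of_left_le (aux_chainStrength_le_one G l)

lemma aux_ne_of_isPair (G : FIG V) {x y : V} (h : G.IsPair x y) : x ≠ y := by
  rintro rfl
  have h1 := G.eta_le x x
  rw [G.rho_irrefl] at h1
  have h2 := le_trans h1 (min_le_right _ _)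
  exact absurd h (not_lt.2 h2)

lemma aux_sin_symm (G : FIG V) {x y : V} (h : G.SIN x y) : G.SIN y x :=
  ⟨h.2.1, h.1, h.2.2.2, h.2.2.1⟩

/-- The key one-factor estimate: a walk from `a` to `y` whose steps all have
`pairMin` at least `c` yields `min c (η (y,ya)) ≤ η (a,ay)`, provided `y` is a
strong incidence neighbour of `a`. -/
lemma aux_walk_bound (G : FIG V) {a y : V} (h : G.SIN a y) (m : List V)
    (hhead : m.head? = some a) (hlast : m.getLast? = some y)
    (c : ℝ) (hc1 : c ≤ 1) (hc : ∀ p ∈ m.zip m.tail, c ≤ G.pairMin p.1 p.2) :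
    min c (G.eta y a) ≤ G.eta a y := by
  have hay : a ≠ y := aux_ne_of_isPair G h.1
  by_cases hstep : ∃ p ∈ m.zip m.tail, p = (a, y) ∨ p = (y, a)
  · obtain ⟨p, hp, hcase⟩ := hstep
    have hcp := hc p hp
    rcases hcase with rfl | rfl
    · exact le_trans (min_le_left _ _) (le_trans hcp (min_le_left _ _))
    · exact le_trans (min_le_left _ _) (le_trans hcp (min_le_right _ _))
  · push_neg at hstep
    obtain ⟨m', hnd, hh, hl, -, hsteps⟩ := aux_exists_nodup_walk m.length m le_rfl
    set G' := G.deletePair a y with hG'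
    have hpm : ∀ p ∈ m'.zip m'.tail, G'.pairMin p.1 p.2 = G.pairMin p.1 p.2 := by
      intro p hp
      have hmem := hsteps p hp
      have h1 : ¬(p.1 = a ∧ p.2 = y) := by
        rintro ⟨e1, e2⟩
        exact (hstep p hmem).1 (Prod.ext e1 e2)
      have h2 : ¬(p.2 = a ∧ p.1 = y) := by
        rintro ⟨e1, e2⟩
        exact (hstep p hmem).2 (Prod.ext e2 e1)
      simp only [pairMin, hG', deletePair, if_neg h1, if_neg h2]
    have hety : G'.eta y a = G.eta y a := by
      simp only [hG', deletePair]
      exact if_neg (fun hcon => hay hcon.1.symm)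
    have hchain : c ≤ G'.chainStrength m' := by
      refine aux_le_chainStrength G' c hc1 m' fun p hp => ?_
      rw [hpm p hp]
      exact hc p (hsteps p hp)
    have he : min (G'.chainStrength m') (G'.eta y a) ∈ G'.pathStrengths a a y :=
      ⟨m', hnd, hh.trans hhead, Or.inr ⟨hl.trans hlast, rfl⟩⟩
    have h1 : min (G'.chainStrength m') (G'.eta y a) ≤ G'.ICONN a a y :=
      le_csSup (aux_bddAbove_pathStrengths G' a a y) he
    have h2 : G'.ICONN a a y ≤ G.eta a y := h.2.2.1
    calc min c (G.eta y a) ≤ min (G'.chainStrength m') (G'.eta y a) := by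
          rw [hety]; exact min_le_min hchain le_rfl
      _ ≤ G.eta a y := h1.trans h2

lemma aux_tensor_eta_le_fst (G₁ : FIG V₁) (G₂ : FIG V₂) (p q : V₁ × V₂) :
    (G₁.tensor G₂).eta p q ≤ G₁.eta p.1 q.1 := by
  show (if _ then _ else _) ≤ _
  split
  · exact min_le_left _ _
  · exact G₁.eta_nonneg _ _

lemma aux_tensor_eta_le_snd (G₁ : FIG V₁) (G₂ : FIG V₂) (p q : V₁ × V₂) :
    (G₁.tensor G₂).eta p q ≤ G₂.eta p.2 q.2 := by
  show (if _ then _ else _) ≤ _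
  split
  · exact min_le_right _ _
  · exact G₂.eta_nonneg _ _

lemma aux_deletePair_eta_le (G : FIG V) (a b u v : V) :
    (G.deletePair a b).eta u v ≤ G.eta u v := by
  show (if _ then _ else _) ≤ _
  split
  · exact G.eta_nonneg _ _
  · exact le_rfl

lemma aux_tensor_isStrongPair (G₁ : FIG V₁) (G₂ : FIG V₂) {a y : V₁} {b z : V₂}
    (h1 : G₁.SIN a y) (h2 : G₂.SIN b z) :
    (G₁.tensor G₂).IsStrongPair (a, b) (y, z) := by
  set T := G₁.tensor G₂ with hT
  set T' := T.deletePair (a, b) (y, z) with hT'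
  have hTpos : 0 ≤ T.eta (a, b) (y, z) := T.eta_nonneg _ _
  refine Real.sSup_le ?_ hTpos
  rintro s ⟨l, hnd, hhead, hdisj⟩
  rcases hdisj with ⟨hlast, rfl⟩ | ⟨hlast, rfl⟩
  · have h0 : T'.eta (a, b) (y, z) = 0 := by
      simp [hT', deletePair]
    rw [h0]
    exact le_trans (min_le_right _ _) hTpos
  · -- the path ends at the other endpoint (y,z)
    have hc1 : T'.chainStrength l ≤ 1 := aux_chainStrength_le_one T' l
    have hcs : ∀ p ∈ l.zip l.tail, T'.chainStrength l ≤ T'.pairMin p.1 p.2 :=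
      aux_chainStrength_le_pairMin T' l
    have hT'le : ∀ p q : V₁ × V₂, T'.eta p q ≤ T.eta p q := fun p q =>
      aux_deletePair_eta_le T (a, b) (y, z) p q
    -- coordinate 1 estimate
    have key1 : min (T'.chainStrength l) (G₁.eta y a) ≤ G₁.eta a y := by
      refine aux_walk_bound G₁ h1 (l.map Prod.fst) ?_ ?_ _ hc1 ?_
      · rw [List.head?_map, hhead]; rfl
      · rw [List.getLast?_map, hlast]; rfl
      · intro p hp
        rw [show (l.map Prod.fst).tail = l.tail.map Prod.fst from List.map_tail.symm,
          List.zip_map, List.mem_map] at hp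
        obtain ⟨q, hq, rfl⟩ := hp
        refine le_trans (hcs q hq) ?_
        exact min_le_min (le_trans (hT'le _ _) (aux_tensor_eta_le_fst G₁ G₂ _ _))
          (le_trans (hT'le _ _) (aux_tensor_eta_le_fst G₁ G₂ _ _))
    -- coordinate 2 estimate
    have key2 : min (T'.chainStrength l) (G₂.eta z b) ≤ G₂.eta b z := by
      refine aux_walk_bound G₂ h2 (l.map Prod.snd) ?_ ?_ _ hc1 ?_
      · rw [List.head?_map, hhead]; rfl
      · rw [List.getLast?_map, hlast]; rfl
      · intro p hp
        rw [show (l.map Prod.snd).tail = l.tail.map Prod.snd from List.map_tail.symm,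
          List.zip_map, List.mem_map] at hp
        obtain ⟨q, hq, rfl⟩ := hp
        refine le_trans (hcs q hq) ?_
        exact min_le_min (le_trans (hT'le _ _) (aux_tensor_eta_le_snd G₁ G₂ _ _))
          (le_trans (hT'le _ _) (aux_tensor_eta_le_snd G₁ G₂ _ _))
    have hTval : T.eta (a, b) (y, z) = min (G₁.eta a y) (G₂.eta b z) := by
      simp only [hT, tensor]
      exact if_pos ⟨h1.1, h1.2.1, h2.1, h2.2.1⟩
    rw [hTval]
    have hs1 : T'.eta (y, z) (a, b) ≤ G₁.eta y a :=
      le_trans (hT'le _ _) (aux_tensor_eta_le_fst G₁ G₂ _ _)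
    have hs2 : T'.eta (y, z) (a, b) ≤ G₂.eta z b :=
      le_trans (hT'le _ _) (aux_tensor_eta_le_snd G₁ G₂ _ _)
    refine le_min ?_ ?_
    · exact le_trans (le_min (min_le_left _ _) (le_trans (min_le_right _ _) hs1)) key1
    · exact le_trans (le_min (min_le_left _ _) (le_trans (min_le_right _ _) hs2)) key2

lemma aux_tensor_SIN (G₁ : FIG V₁) (G₂ : FIG V₂) {a y : V₁} {b z : V₂}
    (h1 : G₁.SIN a y) (h2 : G₂.SIN b z) :
    (G₁.tensor G₂).SIN (a, b) (y, z) := by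
  refine ⟨?_, ?_, aux_tensor_isStrongPair G₁ G₂ h1 h2,
    aux_tensor_isStrongPair G₁ G₂ (aux_sin_symm G₁ h1) (aux_sin_symm G₂ h2)⟩
  · show (0 : ℝ) < if _ then _ else _
    rw [if_pos ⟨h1.1, h1.2.1, h2.1, h2.2.1⟩]
    exact lt_min h1.1 h2.1
  · show (0 : ℝ) < if _ then _ else _
    rw [if_pos ⟨h1.2.1, h1.1, h2.2.1, h2.1⟩]
    exact lt_min h1.2.1 h2.2.1

lemma aux_vertexWeight_nonneg (G : FIG V) (x : V) : 0 ≤ G.vertexWeight x := by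
  refine Real.sInf_nonneg ?_
  rintro w ⟨y, -, rfl⟩
  exact G.eta_nonneg _ _

lemma aux_weight_nonneg (G : FIG V) (D : Finset V) : 0 ≤ G.weight D :=
  Finset.sum_nonneg fun x _ => aux_vertexWeight_nonneg G x

lemma aux_gammaIS_le (G : FIG V) (D : Finset V) (hD : G.SIDS D) :
    G.gammaIS ≤ G.weight D := by
  refine csInf_le ⟨0, ?_⟩ ⟨D, hD, rfl⟩
  rintro w ⟨E, -, rfl⟩
  exact aux_weight_nonneg G E

/-- **Theorem 34.** If `D₁`, `D₂` are strong incidence dominating sets of the strong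
fuzzy incidence graphs `G₁`, `G₂` without isolated vertices, then `D₁ × V₂` and
`V₁ × D₂` are strong incidence dominating sets of the tensor product, and the strong
incidence domination number of the tensor product is at most
`min (W (D₁ × V₂)) (W (V₁ × D₂))`. -/
theorem tensor_SIDS_prod (G₁ : FIG V₁) (G₂ : FIG V₂)
    (h₁ : G₁.Strong) (h₂ : G₂.Strong)
    (hiso₁ : ∀ x : V₁, ∃ y, G₁.SIN x y) (hiso₂ : ∀ x : V₂, ∃ y, G₂.SIN x y)
    (D₁ : Finset V₁) (D₂ : Finset V₂) (hD₁ : G₁.SIDS D₁) (hD₂ : G₂.SIDS D₂) :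
    (G₁.tensor G₂).SIDS (D₁ ×ˢ (Finset.univ : Finset V₂)) ∧
    (G₁.tensor G₂).SIDS ((Finset.univ : Finset V₁) ×ˢ D₂) ∧
    (G₁.tensor G₂).gammaIS ≤
      min ((G₁.tensor G₂).weight (D₁ ×ˢ (Finset.univ : Finset V₂)))
        ((G₁.tensor G₂).weight ((Finset.univ : Finset V₁) ×ˢ D₂)) := by
  have hS1 : (G₁.tensor G₂).SIDS (D₁ ×ˢ (Finset.univ : Finset V₂)) := by
    rintro ⟨x₁, x₂⟩ hx
    have hx1 : x₁ ∉ D₁ := fun h => hx (Finset.mem_product.2 ⟨h, Finset.mem_univ _⟩)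
    obtain ⟨y₁, hy₁, hsin₁⟩ := hD₁ x₁ hx1
    obtain ⟨y₂, hsin₂⟩ := hiso₂ x₂
    exact ⟨(y₁, y₂), Finset.mem_product.2 ⟨hy₁, Finset.mem_univ _⟩,
      aux_tensor_SIN G₁ G₂ hsin₁ hsin₂⟩
  have hS2 : (G₁.tensor G₂).SIDS ((Finset.univ : Finset V₁) ×ˢ D₂) := by
    rintro ⟨x₁, x₂⟩ hx
    have hx2 : x₂ ∉ D₂ := fun h => hx (Finset.mem_product.2 ⟨Finset.mem_univ _, h⟩)
    obtain ⟨y₂, hy₂, hsin₂⟩ := hD₂ x₂ hx2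
    obtain ⟨y₁, hsin₁⟩ := hiso₁ x₁
    exact ⟨(y₁, y₂), Finset.mem_product.2 ⟨Finset.mem_univ _, hy₂⟩,
      aux_tensor_SIN G₁ G₂ hsin₁ hsin₂⟩
  exact ⟨hS1, hS2, le_min (aux_gammaIS_le _ _ hS1) (aux_gammaIS_le _ _ hS2)⟩

end FIG
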